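/- Suppose the Euler characteristic χ(Σ) is nonzero and α < λ_g(Σ). For 0 < ε < 4π let u_ε ∈ 𝒦_g with ‖u_ε‖_{1,α} = 1 be a maximizer of ∫_Σ e^{(4π−ε) u²} dv_g over {u ∈ 𝒦_g : ‖u‖_{1,α} ≤ 1}. Then lim_{ε→0} ∫_Σ e^{(4π−ε) u_ε²} dv_g = sup{∫_Σ e^{4π u²} dv_g : u ∈ 𝒦_g, ‖u‖_{1,α} ≤ 1}, where both sides may equal +∞. -/

import Mathlib

/-!
Abstract framework for a compact Riemannian surface `(Σ, g)` without boundary.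
Since Mathlib does not yet have Riemannian metrics, curvature, or Sobolev
spaces on manifolds, we abstract the geometric data:

* `M`            : the underlying (compact) surface `Σ`;
* `vol`          : the Riemannian volume measure `dv_g`;
* `K : M → ℝ`    : the Gaussian curvature `K_g`;
* `gradSq u`     : the pointwise squared gradient `|∇_g u|²`;
* `W12`          : the Sobolev space `W^{1,2}(Σ)`, as a set of functions;
* `χ : ℤ`        : the Euler characteristic, related to `K` by the
                   Gauss–Bonnet formula `∫_Σ K_g dv_g = 2π χ(Σ)`.
-/

open MeasureTheory Real Filter Metric
open scoped ENNReal Topology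

noncomputable section

variable {M : Type*}

/-- The function space `𝒦_g = {u ∈ W^{1,2}(Σ) : ∫_Σ K_g u dv_g = 0}`. -/
def Kspace [MeasurableSpace M] (vol : Measure M) (K : M → ℝ)
    (W12 : Set (M → ℝ)) : Set (M → ℝ) :=
  {u | u ∈ W12 ∧ ∫ x, K x * u x ∂vol = 0}

/-- `λ_g(Σ) = inf {∫_Σ |∇_g u|² dv_g : u ∈ 𝒦_g, ∫_Σ u² dv_g = 1}`. -/
def lambdaG [MeasurableSpace M] (vol : Measure M) (K : M → ℝ)
    (gradSq : (M → ℝ) → M → ℝ) (W12 : Set (M → ℝ)) : ℝ :=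
  sInf ((fun u => ∫ x, gradSq u x ∂vol) ''
    {u | u ∈ Kspace vol K W12 ∧ ∫ x, (u x) ^ 2 ∂vol = 1})

/-- `‖u‖_{1,α} = (∫_Σ |∇_g u|² dv_g − α ∫_Σ u² dv_g)^{1/2}`. -/
def norm1a [MeasurableSpace M] (vol : Measure M)
    (gradSq : (M → ℝ) → M → ℝ) (α : ℝ) (u : M → ℝ) : ℝ :=
  Real.sqrt ((∫ x, gradSq u x ∂vol) - α * ∫ x, (u x) ^ 2 ∂vol)

/-- `sup_{u ∈ A} ∫_Σ e^{γ u²} dv_g`, valued in `ℝ≥0∞`. -/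
def tmSup [MeasurableSpace M] (vol : Measure M) (γ : ℝ)
    (A : Set (M → ℝ)) : ℝ≥0∞ :=
  ⨆ u ∈ A, ∫⁻ x, ENNReal.ofReal (Real.exp (γ * (u x) ^ 2)) ∂vol

lemma trunc_lintegral {α : Type*} [MeasurableSpace α] (μ : Measure α)
    (F : α → ℝ≥0∞) (hF : ∀ x, F x ≠ ∞) :
    ∫⁻ x, F x ∂μ = ⨆ n : ℕ, ∫⁻ x, min (F x) n ∂μ := by
  refine le_antisymm ?_ (iSup_le fun n => lintegral_mono fun x => min_le_left _ _)
  rw [MeasureTheory.lintegral_def]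
  refine iSup₂_le fun g hg => ?_
  have hbd : ∃ C : ℝ≥0∞, C ≠ ∞ ∧ ∀ x, g x ≤ C := by
    refine ⟨g.range.sup id, ?_, fun x => Finset.le_sup (f := id) (g.mem_range_self x)⟩
    refine (Finset.sup_lt_iff (by simp : (⊥ : ℝ≥0∞) < ∞)).2 (fun b hb => ?_) |>.ne
    rcases SimpleFunc.mem_range.1 hb with ⟨x, rfl⟩
    exact lt_of_le_of_lt (hg x) (lt_top_iff_ne_top.2 (hF x))
  obtain ⟨C, hC, hgC⟩ := hbd
  obtain ⟨n, hn⟩ := ENNReal.exists_nat_gt hC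
  calc g.lintegral μ = ∫⁻ x, g x ∂μ := (SimpleFunc.lintegral_eq_lintegral g μ).symm
    _ ≤ ∫⁻ x, min (F x) n ∂μ :=
        lintegral_mono fun x => le_min (hg x) ((hgC x).trans hn.le)
    _ ≤ _ := le_iSup (fun n : ℕ => ∫⁻ x, min (F x) (n : ℝ≥0∞) ∂μ) n

lemma pointwise_key {t N ε : ℝ} (ht : 0 ≤ t) (hN : 0 ≤ N) (hε : 0 ≤ ε)
    (hε4 : ε ≤ 4 * π) :
    ENNReal.ofReal (Real.exp (-(ε * N))) *
      min (ENNReal.ofReal (Real.exp (4 * π * t))) (ENNReal.ofReal (Real.exp (4 * π * N)))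
      ≤ ENNReal.ofReal (Real.exp ((4 * π - ε) * t)) := by
  rcases le_total t N with h | h
  · calc _ ≤ ENNReal.ofReal (Real.exp (-(ε * N))) * ENNReal.ofReal (Real.exp (4 * π * t)) :=
        mul_le_mul_right (min_le_left _ _) _
    _ = ENNReal.ofReal (Real.exp (-(ε * N)) * Real.exp (4 * π * t)) :=
        (ENNReal.ofReal_mul (Real.exp_nonneg _)).symm
    _ ≤ _ := by
        rw [← Real.exp_add]
        exact ENNReal.ofReal_le_ofReal (Real.exp_le_exp.2 (by nlinarith))
  · calc _ ≤ ENNReal.ofReal (Real.exp (-(ε * N))) * ENNReal.ofReal (Real.exp (4 * π * N)) :=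
        mul_le_mul_right (min_le_right _ _) _
    _ = ENNReal.ofReal (Real.exp (-(ε * N)) * Real.exp (4 * π * N)) :=
        (ENNReal.ofReal_mul (Real.exp_nonneg _)).symm
    _ ≤ _ := by
        rw [← Real.exp_add]
        exact ENNReal.ofReal_le_ofReal (Real.exp_le_exp.2 (by nlinarith))


/-- if `u_ε ∈ 𝒦_g`, `‖u_ε‖_{1,α} = 1`, maximizes the
subcritical functional for each `0 < ε < 4π`, then
`lim_{ε→0} ∫_Σ e^{(4π−ε)u_ε²} dv_g = sup {∫_Σ e^{4π u²} dv_g : u ∈ 𝒦_g,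
‖u‖_{1,α} ≤ 1}` (in `ℝ≥0∞`, so both sides may be `+∞`). -/
theorem subcritical_integrals_tendsto_sup
    [TopologicalSpace M] [CompactSpace M] [MeasurableSpace M]
    (vol : Measure M) [IsFiniteMeasure vol]
    (K : M → ℝ) (gradSq : (M → ℝ) → M → ℝ) (W12 : Set (M → ℝ))
    (χ : ℤ) (hGB : ∫ x, K x ∂vol = 2 * π * χ) (hχ : χ ≠ 0)
    (α : ℝ) (hα : α < lambdaG vol K gradSq W12)
    (u : ℝ → M → ℝ)
    (hmem : ∀ ε : ℝ, 0 < ε → ε < 4 * π → u ε ∈ Kspace vol K W12)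
    (hnorm : ∀ ε : ℝ, 0 < ε → ε < 4 * π → norm1a vol gradSq α (u ε) = 1)
    (hmax : ∀ ε : ℝ, 0 < ε → ε < 4 * π →
      (∫⁻ x, ENNReal.ofReal (Real.exp ((4 * π - ε) * (u ε x) ^ 2)) ∂vol) =
        tmSup vol (4 * π - ε)
          {w | w ∈ Kspace vol K W12 ∧ norm1a vol gradSq α w ≤ 1}) :
    Tendsto
      (fun ε : ℝ =>
        ∫⁻ x, ENNReal.ofReal (Real.exp ((4 * π - ε) * (u ε x) ^ 2)) ∂vol)
      (𝓝[>] 0)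
      (𝓝 (tmSup vol (4 * π)
        {w | w ∈ Kspace vol K W12 ∧ norm1a vol gradSq α w ≤ 1})) := by
  set A : Set (M → ℝ) := {w | w ∈ Kspace vol K W12 ∧ norm1a vol gradSq α w ≤ 1} with hA
  set G : ℝ → ℝ≥0∞ := fun ε => tmSup vol (4 * π - ε) A with hG
  have hpi : (0 : ℝ) < π := Real.pi_pos
  -- G is antitone
  have hanti : Antitone G := by
    intro ε₁ ε₂ h
    refine iSup₂_mono fun w _ => lintegral_mono fun x => ENNReal.ofReal_le_ofReal
      (Real.exp_le_exp.2 ?_)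
    have := sq_nonneg (w x)
    nlinarith
  -- the function eventually agrees with G
  have hEv : ∀ᶠ ε in 𝓝[>] (0 : ℝ),
      (∫⁻ x, ENNReal.ofReal (Real.exp ((4 * π - ε) * (u ε x) ^ 2)) ∂vol) = G ε := by
    filter_upwards [Ioo_mem_nhdsGT_of_mem (by constructor <;> [rfl; positivity] :
      (0:ℝ) ∈ Set.Ico 0 (4 * π))] with ε hε
    exact hmax ε hε.1 hε.2
  -- the key supremum identity
  have hKey : sSup (G '' Set.Ioi (0 : ℝ)) = G 0 := by
    refine le_antisymm (sSup_le ?_) ?_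
    · rintro _ ⟨ε, hε, rfl⟩
      exact hanti (le_of_lt hε)
    · set S := sSup (G '' Set.Ioi (0 : ℝ)) with hS
      show tmSup vol (4 * π - 0) A ≤ S
      refine iSup₂_le fun w hw => ?_
      rw [trunc_lintegral vol _ (fun x => ENNReal.ofReal_ne_top)]
      refine iSup_le fun n => ?_
      set F : M → ℝ≥0∞ := fun x => ENNReal.ofReal (Real.exp ((4 * π - 0) * (w x) ^ 2))
      -- for each ε ∈ (0, 4π), ∫ min(F, n) ≤ exp(εn) * S
      have hstep : ∀ ε : ℝ, ε ∈ Set.Ioo (0:ℝ) (4 * π) →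
          (∫⁻ x, min (F x) n ∂vol) ≤ ENNReal.ofReal (Real.exp (ε * n)) * S := by
        intro ε hε
        have hεS : ENNReal.ofReal (Real.exp (-(ε * n))) * (∫⁻ x, min (F x) n ∂vol) ≤ S := by
          calc ENNReal.ofReal (Real.exp (-(ε * n))) * (∫⁻ x, min (F x) n ∂vol)
              = ∫⁻ x, ENNReal.ofReal (Real.exp (-(ε * n))) * min (F x) n ∂vol :=
                (lintegral_const_mul' _ _ ENNReal.ofReal_ne_top).symm
            _ ≤ ∫⁻ x, ENNReal.ofReal (Real.exp ((4 * π - ε) * (w x) ^ 2)) ∂vol := by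
                refine lintegral_mono fun x => ?_
                have hn : (n : ℝ≥0∞) ≤ ENNReal.ofReal (Real.exp (4 * π * n)) := by
                  rw [← ENNReal.ofReal_natCast n]
                  refine ENNReal.ofReal_le_ofReal ?_
                  have h1 := Real.add_one_le_exp (4 * π * n)
                  have h2 : (0:ℝ) ≤ (n:ℝ) := Nat.cast_nonneg n
                  have h3 := Real.pi_gt_three
                  nlinarith
                calc ENNReal.ofReal (Real.exp (-(ε * n))) * min (F x) n
                    ≤ ENNReal.ofReal (Real.exp (-(ε * n))) *
                      min (F x) (ENNReal.ofReal (Real.exp (4 * π * n))) :=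
                      mul_le_mul_right (min_le_min_left _ hn) _
                  _ ≤ ENNReal.ofReal (Real.exp ((4 * π - ε) * (w x) ^ 2)) := by
                      have := pointwise_key (t := (w x)^2) (N := (n:ℝ)) (ht := sq_nonneg _)
                        (hN := Nat.cast_nonneg n) (hε := hε.1.le) (hε4 := hε.2.le)
                      simpa [F, sub_zero] using this
            _ ≤ G ε := le_iSup₂ (f := fun v (_ : v ∈ A) =>
                  ∫⁻ x, ENNReal.ofReal (Real.exp ((4 * π - ε) * (v x) ^ 2)) ∂vol) w hw
            _ ≤ S := le_sSup ⟨ε, hε.1, rfl⟩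
        calc (∫⁻ x, min (F x) n ∂vol)
            = (ENNReal.ofReal (Real.exp (ε * n)) * ENNReal.ofReal (Real.exp (-(ε * n)))) *
              (∫⁻ x, min (F x) n ∂vol) := by
              rw [← ENNReal.ofReal_mul (Real.exp_nonneg _), ← Real.exp_add]
              simp
          _ = ENNReal.ofReal (Real.exp (ε * n)) *
              (ENNReal.ofReal (Real.exp (-(ε * n))) * (∫⁻ x, min (F x) n ∂vol)) := by ring
          _ ≤ ENNReal.ofReal (Real.exp (ε * n)) * S := mul_le_mul_right hεS _
      -- pass to the limit ε → 0⁺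
      have hT : Tendsto (fun ε : ℝ => ENNReal.ofReal (Real.exp (ε * n)) * S)
          (𝓝[>] (0:ℝ)) (𝓝 (1 * S)) := by
        refine ENNReal.Tendsto.mul_const ?_ (Or.inl one_ne_zero)
        have : Tendsto (fun ε : ℝ => ENNReal.ofReal (Real.exp (ε * n))) (𝓝 (0:ℝ))
            (𝓝 (ENNReal.ofReal (Real.exp (0 * n)))) := by
          exact (ENNReal.continuous_ofReal.comp
            (Real.continuous_exp.comp (continuous_id.mul continuous_const))).tendsto 0
        simpa using this.mono_left nhdsWithin_le_nhds
      rw [one_mul] at hT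
      refine ge_of_tendsto hT ?_
      filter_upwards [Ioo_mem_nhdsGT_of_mem (by constructor <;> [rfl; positivity] :
        (0:ℝ) ∈ Set.Ico 0 (4 * π))] with ε hε
      exact hstep ε hε
  have hlim : Tendsto G (𝓝[>] (0:ℝ)) (𝓝 (G 0)) := by
    have := hanti.tendsto_nhdsGT 0
    rwa [hKey] at this
  have h0 : G 0 = tmSup vol (4 * π) A := by rw [hG]; norm_num
  rw [h0] at hlim
  have hEv' : (fun ε : ℝ =>
      ∫⁻ x, ENNReal.ofReal (Real.exp ((4 * π - ε) * (u ε x) ^ 2)) ∂vol) =ᶠ[𝓝[>] (0:ℝ)] G := hEv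
  exact Tendsto.congr' hEv'.symm hlim
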